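/- Let B = B(b,a,0) = [[b,a,0],[aᵀ,0,-aᵀ],[0,-a,-b]] with b ∈ Sym_n(ℝ) and a ∈ M_{n,r}(ℝ), and let G(s) = exp(sB). Define h(s) to be the upper-left n×n block of G(s). Then h(s) is symmetric positive definite for all s and satisfies the matrix-valued Bratu equation (h'(s)h(s)⁻¹)' = (a aᵀ) h(s)⁻¹. -/

import Mathlib

open Matrix

/-- Entrywise derivative of a matrix-valued function of a real variable. -/
noncomputable def matDeriv {m n : Type*} (f : ℝ → Matrix m n ℝ) (s : ℝ) : Matrix m n ℝ :=
  Matrix.of fun i j => deriv (fun t => f t i j) s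

open NormedSpace

attribute [local instance] Matrix.linftyOpNormedAddCommGroup Matrix.linftyOpNormedSpace
  Matrix.linftyOpNormedRing Matrix.linftyOpNormedAlgebra

namespace Stmt8Aux


/-- Apply a linear map between matrix spaces to a `HasDerivAt`. -/
theorem HasDerivAt.linComp {E F : Type*} [NormedAddCommGroup E] [NormedSpace ℝ E]
    [NormedAddCommGroup F] [NormedSpace ℝ F] [FiniteDimensional ℝ E]
    (L : E →ₗ[ℝ] F) {f : ℝ → E} {f' : E} {s : ℝ} (hf : HasDerivAt f f' s) :
    HasDerivAt (fun t => L (f t)) (L f') s := by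
  simpa [Function.comp_def] using (L.toContinuousLinearMap.hasFDerivAt.comp_hasDerivAt s hf)

variable {m n p q : Type*} [Fintype m] [Fintype n] [Fintype p] [Fintype q]

/-- Entry extraction as a linear map. -/
def entryLM (i : m) (j : n) : Matrix m n ℝ →ₗ[ℝ] ℝ where
  toFun M := M i j
  map_add' _ _ := rfl
  map_smul' _ _ := rfl

theorem hasDerivAt_entry {f : ℝ → Matrix m n ℝ} {f' : Matrix m n ℝ} {s : ℝ}
    (hf : HasDerivAt f f' s) (i : m) (j : n) :
    HasDerivAt (fun t => f t i j) (f' i j) s :=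
  HasDerivAt.linComp (entryLM i j) hf

theorem matDeriv_eq {f : ℝ → Matrix m n ℝ} {f' : Matrix m n ℝ} {s : ℝ}
    (hf : HasDerivAt f f' s) : matDeriv f s = f' := by
  ext i j
  exact (hasDerivAt_entry hf i j).deriv

/-- Submatrix as a linear map. -/
def subLM (e₁ : p → m) (e₂ : q → n) : Matrix m n ℝ →ₗ[ℝ] Matrix p q ℝ where
  toFun M := M.submatrix e₁ e₂
  map_add' _ _ := rfl
  map_smul' _ _ := rfl

theorem hasDerivAt_submatrix {f : ℝ → Matrix m n ℝ} {f' : Matrix m n ℝ} {s : ℝ}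
    (hf : HasDerivAt f f' s) (e₁ : p → m) (e₂ : q → n) :
    HasDerivAt (fun t => (f t).submatrix e₁ e₂) (f'.submatrix e₁ e₂) s :=
  HasDerivAt.linComp (subLM e₁ e₂) hf

/-- Transpose as a linear map. -/
def transposeLM : Matrix m n ℝ →ₗ[ℝ] Matrix n m ℝ where
  toFun M := Mᵀ
  map_add' _ _ := rfl
  map_smul' _ _ := rfl

theorem hasDerivAt_transpose {f : ℝ → Matrix m n ℝ} {f' : Matrix m n ℝ} {s : ℝ}
    (hf : HasDerivAt f f' s) : HasDerivAt (fun t => (f t)ᵀ) (f'ᵀ) s :=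
  HasDerivAt.linComp transposeLM hf

/-- Left multiplication by a fixed matrix, as a linear map. -/
def lmulLM (A : Matrix m n ℝ) : Matrix n p ℝ →ₗ[ℝ] Matrix m p ℝ where
  toFun M := A * M
  map_add' x y := Matrix.mul_add A x y
  map_smul' c x := (Matrix.mul_smul A c x)

theorem hasDerivAt_const_mul (A : Matrix m n ℝ) {f : ℝ → Matrix n p ℝ} {f' : Matrix n p ℝ}
    {s : ℝ} (hf : HasDerivAt f f' s) :
    HasDerivAt (fun t => A * f t) (A * f') s :=
  HasDerivAt.linComp (lmulLM A) hf

/-- Right multiplication by a fixed matrix, as a linear map. -/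
def rmulLM (A : Matrix n p ℝ) : Matrix m n ℝ →ₗ[ℝ] Matrix m p ℝ where
  toFun M := M * A
  map_add' x y := Matrix.add_mul x y A
  map_smul' c x := (Matrix.smul_mul c x A)

theorem hasDerivAt_mul_const (A : Matrix n p ℝ) {f : ℝ → Matrix m n ℝ} {f' : Matrix m n ℝ}
    {s : ℝ} (hf : HasDerivAt f f' s) :
    HasDerivAt (fun t => f t * A) (f' * A) s :=
  HasDerivAt.linComp (rmulLM A) hf

/-- If two matrix-valued functions on `ℝ` have the same derivative everywhere and agree
at `0`, they agree everywhere. -/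
theorem eq_of_hasDerivAt_eq {f g : ℝ → Matrix m n ℝ} {V : ℝ → Matrix m n ℝ}
    (hf : ∀ t, HasDerivAt f (V t) t) (hg : ∀ t, HasDerivAt g (V t) t)
    (h0 : f 0 = g 0) (s : ℝ) : f s = g s := by
  have hd : ∀ t, HasDerivAt (fun u => f u - g u) 0 t := by
    intro t
    have := (hf t).sub (hg t)
    rw [sub_self] at this
    exact this
  have hconst : ∀ x y : ℝ, (fun u => f u - g u) x = (fun u => f u - g u) y := by
    refine is_const_of_deriv_eq_zero (fun t => (hd t).differentiableAt) (fun t => (hd t).deriv) 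
  have := hconst s 0
  simp only [h0, sub_self] at this
  exact sub_eq_zero.mp this


/-- The involution swapping the first and third blocks. -/
def σe (n r : ℕ) : (Fin n ⊕ (Fin r ⊕ Fin n)) ≃ (Fin n ⊕ (Fin r ⊕ Fin n)) where
  toFun x := Sum.elim (fun i => Sum.inr (Sum.inr i)) (Sum.elim (fun j => Sum.inr (Sum.inl j)) Sum.inl) x
  invFun x := Sum.elim (fun i => Sum.inr (Sum.inr i)) (Sum.elim (fun j => Sum.inr (Sum.inl j)) Sum.inl) x
  left_inv x := by rcases x with i | j | k <;> rfl
  right_inv x := by rcases x with i | j | k <;> rfl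

section Main

variable {n r : ℕ} {b : Matrix (Fin n) (Fin n) ℝ} {a : Matrix (Fin n) (Fin r) ℝ}
variable {B : Matrix (Fin n ⊕ (Fin r ⊕ Fin n)) (Fin n ⊕ (Fin r ⊕ Fin n)) ℝ}
variable (hb : bᵀ = b)
variable (hB : B = Matrix.fromBlocks b (Matrix.fromCols a 0) (Matrix.fromRows aᵀ 0)
      (Matrix.fromBlocks 0 (-aᵀ) (-a) (-b)))

include hB

theorem Bt (hb : bᵀ = b) : Bᵀ = B := by
  have hbe : ∀ i j, b i j = b j i := fun i j => by conv_lhs => rw [← hb, Matrix.transpose_apply]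
  subst hB
  ext (i | j | k) (i' | j' | k') <;>
    simp [Matrix.fromBlocks, Matrix.fromCols, Matrix.fromRows_apply_inl, Matrix.fromRows_apply_inr, hbe]

theorem Bswap : B.submatrix (σe n r) (σe n r) = -B := by
  subst hB
  ext (i | j | k) (i' | j' | k') <;>
    simp [σe, Matrix.fromBlocks, Matrix.fromCols, Matrix.fromRows_apply_inl, Matrix.fromRows_apply_inr]

omit hB

/-- `G(s) = exp (s B)`. -/
noncomputable def expG (B : Matrix (Fin n ⊕ (Fin r ⊕ Fin n)) (Fin n ⊕ (Fin r ⊕ Fin n)) ℝ)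
    (s : ℝ) : Matrix (Fin n ⊕ (Fin r ⊕ Fin n)) (Fin n ⊕ (Fin r ⊕ Fin n)) ℝ :=
  NormedSpace.exp (s • B)

theorem expG_zero : expG B 0 = 1 := by simp [expG, NormedSpace.exp_zero]

theorem hasDerivAt_expG (s : ℝ) : HasDerivAt (expG B) (B * expG B s) s :=
  hasDerivAt_exp_smul_const' B s

theorem hasDerivAt_expG' (s : ℝ) : HasDerivAt (expG B) (expG B s * B) s :=
  hasDerivAt_exp_smul_const B s

theorem continuous_expG : Continuous (expG B) := by
  have : ∀ t, ContinuousAt (expG B) t := fun t => (hasDerivAt_expG t).continuousAt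
  exact continuous_iff_continuousAt.mpr this

theorem expG_add (s t : ℝ) : expG B (s + t) = expG B s * expG B t := by
  rw [expG, expG, expG, add_smul]
  exact exp_add_of_commute (((Commute.refl B).smul_left s).smul_right t)

theorem expG_mul_neg (s : ℝ) : expG B s * expG B (-s) = 1 := by
  rw [← expG_add, add_neg_cancel, expG_zero]

theorem expG_neg_mul (s : ℝ) : expG B (-s) * expG B s = 1 := by
  rw [← expG_add, neg_add_cancel, expG_zero]

include hb hB in
theorem expG_transpose (s : ℝ) : (expG B s)ᵀ = expG B s := by
  rw [expG, ← Matrix.exp_transpose, Matrix.transpose_smul, Bt hB hb]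

include hB in
theorem expG_swap (s : ℝ) :
    (expG B s).submatrix (σe n r) (σe n r) = expG B (-s) := by
  have hσ : (σe n r).symm = σe n r := rfl
  have hfun : ⇑(Matrix.reindexAlgEquiv ℝ ℝ ((σe n r).symm)) =
      fun M : Matrix (Fin n ⊕ (Fin r ⊕ Fin n)) (Fin n ⊕ (Fin r ⊕ Fin n)) ℝ =>
        M.submatrix (σe n r) (σe n r) := by
    funext M
    rw [Matrix.reindexAlgEquiv_apply, Matrix.reindex_apply]
    simp [Equiv.symm_symm, hσ]
  have key := map_exp (Matrix.reindexAlgEquiv ℝ ℝ ((σe n r).symm))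
      (by rw [hfun]; exact continuous_id.matrix_submatrix _ _) (s • B)
  rw [hfun] at key
  simp only [expG] at key ⊢
  refine key.trans ?_
  have : (s • B).submatrix (σe n r) (σe n r) = (-s) • B := by
    ext i j
    have e := congrFun (congrFun (Bswap hB) i) j
    simp only [Matrix.submatrix_apply, Matrix.neg_apply] at e
    simp [Matrix.submatrix_apply, e]
  rw [this]
  exact rfl


/-- first block column / blocks of `G`. -/
noncomputable def bh (M : Matrix (Fin n ⊕ (Fin r ⊕ Fin n)) (Fin n ⊕ (Fin r ⊕ Fin n)) ℝ) :
    ℝ → Matrix (Fin n) (Fin n) ℝ :=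
  fun s => (expG M s).submatrix Sum.inl Sum.inl

noncomputable def bu (M : Matrix (Fin n ⊕ (Fin r ⊕ Fin n)) (Fin n ⊕ (Fin r ⊕ Fin n)) ℝ) :
    ℝ → Matrix (Fin r) (Fin n) ℝ :=
  fun s => (expG M s).submatrix (fun k => Sum.inr (Sum.inl k)) Sum.inl

noncomputable def bw (M : Matrix (Fin n ⊕ (Fin r ⊕ Fin n)) (Fin n ⊕ (Fin r ⊕ Fin n)) ℝ) :
    ℝ → Matrix (Fin n) (Fin n) ℝ :=
  fun s => (expG M s).submatrix (fun i => Sum.inr (Sum.inr i)) Sum.inl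

noncomputable def bm (M : Matrix (Fin n ⊕ (Fin r ⊕ Fin n)) (Fin n ⊕ (Fin r ⊕ Fin n)) ℝ) :
    ℝ → Matrix (Fin n) (Fin r) ℝ :=
  fun s => (expG M s).submatrix Sum.inl (fun k => Sum.inr (Sum.inl k))

theorem bh_zero : bh B 0 = 1 := by
  ext i j
  simp [bh, expG_zero, Matrix.one_apply]

theorem bu_zero : bu B 0 = 0 := by
  ext i j
  simp [bu, expG_zero, Matrix.one_apply]

theorem bw_zero : bw B 0 = 0 := by
  ext i j
  simp [bw, expG_zero, Matrix.one_apply]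

include hb hB in
theorem bh_symm (s : ℝ) : (bh B s)ᵀ = bh B s := by
  ext i j
  have := congrFun (congrFun (expG_transpose hb hB s) (Sum.inl (i : Fin n))) (Sum.inl j)
  simpa [bh, Matrix.transpose_apply] using this

include hb hB in
theorem bm_eq (s : ℝ) : bm B s = (bu B s)ᵀ := by
  ext i j
  have := congrFun (congrFun (expG_transpose hb hB s) (Sum.inr (Sum.inl (j : Fin r)))) (Sum.inl i)
  simpa [bm, bu, Matrix.transpose_apply] using this

include hB in
theorem mulB₁₁ (X : Matrix (Fin n ⊕ (Fin r ⊕ Fin n)) (Fin n ⊕ (Fin r ⊕ Fin n)) ℝ) :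
    (B * X).submatrix Sum.inl Sum.inl =
      b * X.submatrix Sum.inl Sum.inl + a * X.submatrix (fun k => Sum.inr (Sum.inl k)) Sum.inl := by
  ext i j
  simp [Matrix.mul_apply, Fintype.sum_sum_type, hB, Matrix.fromBlocks, Matrix.fromCols,
    Matrix.fromRows_apply_inl, Matrix.fromRows_apply_inr]

include hB in
theorem mulB₂₁ (X : Matrix (Fin n ⊕ (Fin r ⊕ Fin n)) (Fin n ⊕ (Fin r ⊕ Fin n)) ℝ) :
    (B * X).submatrix (fun k => Sum.inr (Sum.inl k)) Sum.inl =
      aᵀ * X.submatrix Sum.inl Sum.inl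
        - aᵀ * X.submatrix (fun i => Sum.inr (Sum.inr i)) Sum.inl := by
  ext i j
  simp [Matrix.mul_apply, Fintype.sum_sum_type, hB, Matrix.fromBlocks, Matrix.fromCols,
    Matrix.fromRows_apply_inl, Matrix.fromRows_apply_inr, sub_eq_add_neg, Finset.sum_add_distrib, mul_comm]

include hB in
theorem mulB₃₁ (X : Matrix (Fin n ⊕ (Fin r ⊕ Fin n)) (Fin n ⊕ (Fin r ⊕ Fin n)) ℝ) :
    (B * X).submatrix (fun i => Sum.inr (Sum.inr i)) Sum.inl =
      -(a * X.submatrix (fun k => Sum.inr (Sum.inl k)) Sum.inl)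
        - b * X.submatrix (fun i => Sum.inr (Sum.inr i)) Sum.inl := by
  ext i j
  simp [Matrix.mul_apply, Fintype.sum_sum_type, hB, Matrix.fromBlocks, Matrix.fromCols,
    Matrix.fromRows_apply_inl, Matrix.fromRows_apply_inr, sub_eq_add_neg, Finset.sum_add_distrib]

include hB in
theorem mulB₁₁' (X : Matrix (Fin n ⊕ (Fin r ⊕ Fin n)) (Fin n ⊕ (Fin r ⊕ Fin n)) ℝ) :
    (X * B).submatrix Sum.inl Sum.inl =
      X.submatrix Sum.inl Sum.inl * b
        + X.submatrix Sum.inl (fun k => Sum.inr (Sum.inl k)) * aᵀ := by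
  ext i j
  simp [Matrix.mul_apply, Fintype.sum_sum_type, hB, Matrix.fromBlocks, Matrix.fromCols,
    Matrix.fromRows_apply_inl, Matrix.fromRows_apply_inr]

include hB in
theorem hasDerivAt_bh (s : ℝ) :
    HasDerivAt (bh B) (b * bh B s + a * bu B s) s := by
  have h1 := hasDerivAt_submatrix (hasDerivAt_expG (B := B) s) Sum.inl Sum.inl
  rw [mulB₁₁ hB] at h1
  exact h1

include hB in
theorem hasDerivAt_bu (s : ℝ) :
    HasDerivAt (bu B) (aᵀ * bh B s - aᵀ * bw B s) s := by
  have h1 := hasDerivAt_submatrix (hasDerivAt_expG (B := B) s) (fun k => Sum.inr (Sum.inl k)) Sum.inl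
  rw [mulB₂₁ hB] at h1
  exact h1

include hB in
theorem hasDerivAt_bw (s : ℝ) :
    HasDerivAt (bw B) (-(a * bu B s) - b * bw B s) s := by
  have h1 := hasDerivAt_submatrix (hasDerivAt_expG (B := B) s) (fun i => Sum.inr (Sum.inr i)) Sum.inl
  rw [mulB₃₁ hB] at h1
  exact h1

include hB in
theorem hasDerivAt_bh' (s : ℝ) :
    HasDerivAt (bh B) (bh B s * b + bm B s * aᵀ) s := by
  have h1 := hasDerivAt_submatrix (hasDerivAt_expG' (B := B) s) Sum.inl Sum.inl
  rw [mulB₁₁' hB] at h1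
  exact h1

theorem continuous_bh : Continuous (bh B) := (continuous_expG).matrix_submatrix _ _

theorem continuous_bw : Continuous (bw B) := (continuous_expG).matrix_submatrix _ _

/-- `F(s) = ∫_0^s (h - w)`. -/
noncomputable def bF (M : Matrix (Fin n ⊕ (Fin r ⊕ Fin n)) (Fin n ⊕ (Fin r ⊕ Fin n)) ℝ) :
    ℝ → Matrix (Fin n) (Fin n) ℝ :=
  fun s => ∫ t in (0:ℝ)..s, (bh M t - bw M t)

theorem bF_zero : bF B 0 = 0 := intervalIntegral.integral_same

theorem hasDerivAt_bF (s : ℝ) : HasDerivAt (bF B) (bh B s - bw B s) s := by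
  have hc : Continuous fun t => bh B t - bw B t := continuous_bh.sub continuous_bw
  haveI : TopologicalSpace.PseudoMetrizableSpace (Matrix (Fin n) (Fin n) ℝ) :=
    inferInstanceAs (TopologicalSpace.PseudoMetrizableSpace (Fin n → Fin n → ℝ))
  exact intervalIntegral.integral_hasDerivAt_right (hc.intervalIntegrable _ _)
    (hc.stronglyMeasurableAtFilter _ _) hc.continuousAt


include hB in
theorem A1 (s : ℝ) : bu B s = aᵀ * bF B s := by
  refine eq_of_hasDerivAt_eq (f := bu B) (g := fun t => aᵀ * bF B t) (V := fun t => aᵀ * (bh B t - bw B t))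
    (fun t => ?_) (fun t => ?_) ?_ s
  · beta_reduce; rw [Matrix.mul_sub]; exact hasDerivAt_bu hB t
  · exact hasDerivAt_const_mul aᵀ (hasDerivAt_bF t)
  · beta_reduce; rw [bu_zero, bF_zero, Matrix.mul_zero]

include hB in
theorem A2 (s : ℝ) : b * bF B s = bh B s + bw B s - 1 := by
  refine eq_of_hasDerivAt_eq (f := fun t => b * bF B t) (g := fun t => bh B t + bw B t - 1)
    (V := fun t => b * (bh B t - bw B t))
    (fun t => ?_) (fun t => ?_) ?_ s
  · exact hasDerivAt_const_mul b (hasDerivAt_bF t)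
  · have h1 := ((hasDerivAt_bh hB t).add (hasDerivAt_bw hB t)).sub_const 1
    have : b * bh B t + a * bu B t + (-(a * bu B t) - b * bw B t) = b * (bh B t - bw B t) := by
      rw [Matrix.mul_sub]; abel
    beta_reduce; rwa [this] at h1
  · beta_reduce; rw [bF_zero, Matrix.mul_zero, bh_zero, bw_zero]; abel

include hb hB in
theorem A2t (s : ℝ) : (bF B s)ᵀ * b = bh B s + (bw B s)ᵀ - 1 := by
  have := congrArg Matrix.transpose (A2 hB s)
  rw [Matrix.transpose_mul, hb, Matrix.transpose_sub, Matrix.transpose_add,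
    Matrix.transpose_one, bh_symm hb hB] at this
  rw [this]

include hb hB in
theorem symR (s : ℝ) : bh B s * bF B s = (bF B s)ᵀ * bh B s := by
  have key : ∀ t, bh B t * bF B t - (bF B t)ᵀ * bh B t = 0 := by
    intro u
    refine eq_of_hasDerivAt_eq (f := fun t => bh B t * bF B t - (bF B t)ᵀ * bh B t)
      (g := fun _ => (0 : Matrix (Fin n) (Fin n) ℝ)) (V := fun t =>
      ((bh B t * b + bm B t * aᵀ) * bF B t + bh B t * (bh B t - bw B t))
        - ((bh B t - bw B t)ᵀ * bh B t + (bF B t)ᵀ * (b * bh B t + a * bu B t)))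
      (fun t => ?_) (fun t => ?_) ?_ u
    · exact ((hasDerivAt_bh' hB t).mul (hasDerivAt_bF t)).sub
        ((hasDerivAt_transpose (hasDerivAt_bF t)).mul (hasDerivAt_bh hB t))
    · have hz : ((bh B t * b + bm B t * aᵀ) * bF B t + bh B t * (bh B t - bw B t))
          - ((bh B t - bw B t)ᵀ * bh B t + (bF B t)ᵀ * (b * bh B t + a * bu B t)) = 0 := by
        rw [bm_eq hb hB, A1 hB]
        simp only [Matrix.transpose_mul, Matrix.transpose_transpose, Matrix.transpose_sub,
          bh_symm hb hB]
        simp only [Matrix.add_mul, Matrix.mul_add, Matrix.mul_sub, Matrix.sub_mul,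
          Matrix.mul_assoc]
        rw [A2 hB]
        rw [← Matrix.mul_assoc ((bF B t)ᵀ) b (bh B t), A2t hb hB]
        simp only [Matrix.add_mul, Matrix.mul_add, Matrix.mul_sub, Matrix.sub_mul,
          Matrix.mul_one, Matrix.one_mul]
        abel
      beta_reduce
      rw [hz]
      exact hasDerivAt_const t (0 : Matrix (Fin n) (Fin n) ℝ)
    · beta_reduce
      rw [bF_zero, Matrix.transpose_zero, Matrix.mul_zero, Matrix.zero_mul, sub_zero]
  have := key s
  rwa [sub_eq_zero] at this


include hb hB in
theorem expG_entry_symm (s : ℝ) (p q : Fin n ⊕ (Fin r ⊕ Fin n)) :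
    expG B s p q = expG B s q p := by
  conv_lhs => rw [← expG_transpose hb hB s, Matrix.transpose_apply]

include hb hB in
theorem A3 (s : ℝ) :
    bh B s * bw B s + (bu B s)ᵀ * bu B s + (bw B s)ᵀ * bh B s = 0 := by
  have P : (expG B s).submatrix (σe n r) (σe n r) * expG B s = 1 := by
    rw [expG_swap hB, expG_neg_mul]
  ext i j
  have e := congrFun (congrFun P (Sum.inr (Sum.inr i))) (Sum.inl j)
  simp only [Matrix.mul_apply, Matrix.submatrix_apply, Fintype.sum_sum_type,
    Matrix.one_apply, σe, Equiv.coe_fn_mk, Sum.elim_inl, Sum.elim_inr,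
    Sum.inr.injEq, Sum.inl.injEq, reduceCtorEq, if_false] at e
  simp only [Matrix.add_apply, Matrix.mul_apply, Matrix.transpose_apply,
    Matrix.zero_apply, bh, bu, bw, Matrix.submatrix_apply]
  have g1 : ∀ t : Fin n, expG B s (Sum.inl i) (Sum.inr (Sum.inr t)) =
      expG B s (Sum.inr (Sum.inr t)) (Sum.inl i) := fun t => expG_entry_symm hb hB s _ _
  have g2 : ∀ t : Fin r, expG B s (Sum.inl i) (Sum.inr (Sum.inl t)) =
      expG B s (Sum.inr (Sum.inl t)) (Sum.inl i) := fun t => expG_entry_symm hb hB s _ _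
  simp only [g1, g2] at e
  linarith [e]

include hb hB in
theorem posDef_bh (s : ℝ) : (bh B s).PosDef := by
  have hE2 : expG B s = expG B (s / 2) * expG B (s / 2) := by
    rw [← expG_add]; norm_num
  refine Matrix.PosDef.of_dotProduct_mulVec_pos ?_ ?_
  · show (bh B s)ᴴ = bh B s
    have : (bh B s)ᴴ = (bh B s)ᵀ := by
      ext i j; simp [Matrix.conjTranspose_apply, Matrix.transpose_apply]
    rw [this, bh_symm hb hB]
  · intro x hx
    have hxt : (Sum.elim x 0 : (Fin n ⊕ (Fin r ⊕ Fin n)) → ℝ) ≠ 0 := by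
      intro hc
      apply hx
      funext i
      exact congrFun hc (Sum.inl i)
    set xt : (Fin n ⊕ (Fin r ⊕ Fin n)) → ℝ := Sum.elim x 0 with hxtdef
    have claim1 : star x ⬝ᵥ ((bh B s) *ᵥ x) = xt ⬝ᵥ (expG B s *ᵥ xt) := by
      simp only [star_trivial, dotProduct, Matrix.mulVec, bh,
        Matrix.submatrix_apply, Fintype.sum_sum_type, hxtdef, Sum.elim_inl, Sum.elim_inr,
        Pi.zero_apply, mul_zero, zero_mul, Finset.sum_const_zero, add_zero]
    have claim2 : xt ⬝ᵥ (expG B s *ᵥ xt) =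
        (expG B (s / 2) *ᵥ xt) ⬝ᵥ (expG B (s / 2) *ᵥ xt) := by
      rw [hE2, ← Matrix.mulVec_mulVec, Matrix.dotProduct_mulVec]
      congr 1
      conv_lhs => rw [← expG_transpose hb hB (s / 2)]
      rw [Matrix.vecMul_transpose]
    have claim3 : expG B (s / 2) *ᵥ xt ≠ 0 := by
      intro hc
      apply hxt
      have := congrArg (fun y => expG B (-(s / 2)) *ᵥ y) hc
      simpa [Matrix.mulVec_mulVec, expG_neg_mul, Matrix.mulVec_zero] using this
    rw [claim1, claim2]
    set y := expG B (s / 2) *ᵥ xt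
    have hnn : 0 ≤ y ⬝ᵥ y := Finset.sum_nonneg fun i _ => mul_self_nonneg (y i)
    rcases hnn.lt_or_eq with hlt | heq
    · exact hlt
    · exact absurd ((dotProduct_self_eq_zero).mp heq.symm) claim3


include hb hB in
theorem main_ode (s : ℝ) :
    matDeriv (fun t => matDeriv (bh B) t * (bh B t)⁻¹) s = a * aᵀ * (bh B s)⁻¹ := by
  -- invertibility
  have hdet : ∀ t, IsUnit (bh B t).det := fun t =>
    ((posDef_bh hb hB t).det_pos.ne').isUnit
  have hHi1 : ∀ t, bh B t * (bh B t)⁻¹ = 1 := fun t => Matrix.mul_nonsing_inv _ (hdet t)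
  have hHi2 : ∀ t, (bh B t)⁻¹ * bh B t = 1 := fun t => Matrix.nonsing_inv_mul _ (hdet t)
  have can1 : ∀ (t : ℝ) (X : Matrix (Fin n) (Fin n) ℝ), bh B t * ((bh B t)⁻¹ * X) = X :=
    fun t X => by rw [← Matrix.mul_assoc, hHi1, Matrix.one_mul]
  have can2 : ∀ (t : ℝ) (X : Matrix (Fin n) (Fin n) ℝ), (bh B t)⁻¹ * (bh B t * X) = X :=
    fun t X => by rw [← Matrix.mul_assoc, hHi2, Matrix.one_mul]
  -- derivative of matDeriv (bh B)
  have mdh : ∀ t, matDeriv (bh B) t = b * bh B t + a * bu B t := fun t =>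
    matDeriv_eq (hasDerivAt_bh hB t)
  -- derivative of the inverse
  have hinvd : ∀ t, HasDerivAt (fun u => (bh B u)⁻¹)
      (-(((bh B t)⁻¹ * (b * bh B t + a * bu B t)) * (bh B t)⁻¹)) t := by
    intro t
    have hu : IsUnit (bh B t) := (posDef_bh hb hB t).isUnit
    have hf := hasFDerivAt_ringInverse (𝕜 := ℝ) hu.unit
    rw [hu.unit_spec] at hf
    have hcomp := hf.comp_hasDerivAt t (hasDerivAt_bh hB t)
    have hval : (-(ContinuousLinearMap.mulLeftRight ℝ _ (↑hu.unit⁻¹) (↑hu.unit⁻¹)))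
        (b * bh B t + a * bu B t)
        = -(((bh B t)⁻¹ * (b * bh B t + a * bu B t)) * (bh B t)⁻¹) := by
      have hiu : ((hu.unit⁻¹ : _) : Matrix (Fin n) (Fin n) ℝ) = (bh B t)⁻¹ :=
        calc ((hu.unit⁻¹ : _) : Matrix (Fin n) (Fin n) ℝ)
            = Ring.inverse ((hu.unit : _) : Matrix (Fin n) (Fin n) ℝ) :=
              (Ring.inverse_unit _).symm
          _ = Ring.inverse (bh B t) := by rw [hu.unit_spec]
          _ = (bh B t)⁻¹ := (Matrix.nonsing_inv_eq_ringInverse _).symm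
      simp only [ContinuousLinearMap.neg_apply, ContinuousLinearMap.mulLeftRight_apply, hiu]
    rw [hval] at hcomp
    have hfun : (Ring.inverse ∘ bh B) = fun u => (bh B u)⁻¹ := by
      funext u
      simp [Function.comp, Matrix.nonsing_inv_eq_ringInverse]
    rwa [hfun] at hcomp
  -- rewrite the function whose derivative we take
  have hfeq : (fun t => matDeriv (bh B) t * (bh B t)⁻¹)
      = fun t => (b * bh B t + a * bu B t) * (bh B t)⁻¹ := by
    funext t
    rw [mdh t]
  rw [hfeq]
  -- compute the derivative
  have hprod : HasDerivAt (fun t => (b * bh B t + a * bu B t) * (bh B t)⁻¹)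
      ((b * (b * bh B s + a * bu B s) + a * (aᵀ * bh B s - aᵀ * bw B s)) * (bh B s)⁻¹
        + (b * bh B s + a * bu B s)
          * (-(((bh B s)⁻¹ * (b * bh B s + a * bu B s)) * (bh B s)⁻¹))) s := by
    exact ((hasDerivAt_const_mul b (hasDerivAt_bh hB s)).add
      (hasDerivAt_const_mul a (hasDerivAt_bu hB s))).mul (hinvd s)
  rw [matDeriv_eq hprod]
  -- now pure algebra
  rw [A1 hB s]
  -- abbreviations via plain terms
  have step1 : bF B s * (bh B s)⁻¹ = (bh B s)⁻¹ * (bF B s)ᵀ := by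
    calc bF B s * (bh B s)⁻¹
        = (bh B s)⁻¹ * (bh B s * (bF B s * (bh B s)⁻¹)) := (can2 s _).symm
      _ = (bh B s)⁻¹ * (((bh B s) * (bF B s)) * (bh B s)⁻¹) := by rw [Matrix.mul_assoc]
      _ = (bh B s)⁻¹ * (((bF B s)ᵀ * (bh B s)) * (bh B s)⁻¹) := by rw [symR hb hB s]
      _ = (bh B s)⁻¹ * ((bF B s)ᵀ * ((bh B s) * (bh B s)⁻¹)) := by rw [Matrix.mul_assoc]
      _ = (bh B s)⁻¹ * (bF B s)ᵀ := by rw [hHi1 s, Matrix.mul_one]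
  have hA3' : (bF B s)ᵀ * (a * (aᵀ * bF B s))
      = -(bh B s * bw B s) - (bw B s)ᵀ * bh B s := by
    have h0 := A3 hb hB s
    rw [A1 hB s] at h0
    have h2 : (aᵀ * bF B s)ᵀ * (aᵀ * bF B s) = (bF B s)ᵀ * (a * (aᵀ * bF B s)) := by
      rw [Matrix.transpose_mul, Matrix.transpose_transpose, Matrix.mul_assoc]
    rw [h2] at h0
    have h3 : (bF B s)ᵀ * (a * (aᵀ * bF B s))
        = (bh B s * bw B s + (bF B s)ᵀ * (a * (aᵀ * bF B s)) + (bw B s)ᵀ * bh B s)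
          - bh B s * bw B s - (bw B s)ᵀ * bh B s := by abel
    rw [h0] at h3
    rw [h3]
    abel
  have e1 : (bF B s)ᵀ * (b * bh B s + a * (aᵀ * bF B s))
      = bh B s * (bh B s - bw B s - 1) := by
    rw [Matrix.mul_add, ← Matrix.mul_assoc ((bF B s)ᵀ) b (bh B s), A2t hb hB s, hA3']
    noncomm_ring
  have step2 : bF B s * ((bh B s)⁻¹ * ((b * bh B s + a * (aᵀ * bF B s)) * (bh B s)⁻¹))
      = (bh B s - bw B s - 1) * (bh B s)⁻¹ := by
    calc bF B s * ((bh B s)⁻¹ * ((b * bh B s + a * (aᵀ * bF B s)) * (bh B s)⁻¹))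
        = (bF B s * (bh B s)⁻¹) * ((b * bh B s + a * (aᵀ * bF B s)) * (bh B s)⁻¹) := by
          rw [Matrix.mul_assoc]
      _ = (bh B s)⁻¹ * ((bF B s)ᵀ * ((b * bh B s + a * (aᵀ * bF B s)) * (bh B s)⁻¹)) := by
          rw [step1, Matrix.mul_assoc]
      _ = (bh B s)⁻¹ * (((bF B s)ᵀ * (b * bh B s + a * (aᵀ * bF B s))) * (bh B s)⁻¹) := by
          rw [Matrix.mul_assoc]
      _ = (bh B s)⁻¹ * ((bh B s * (bh B s - bw B s - 1)) * (bh B s)⁻¹) := by rw [e1]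
      _ = (bh B s)⁻¹ * (bh B s * ((bh B s - bw B s - 1) * (bh B s)⁻¹)) := by
          rw [Matrix.mul_assoc]
      _ = (bh B s - bw B s - 1) * (bh B s)⁻¹ := can2 s _
  -- final expansion
  have expand1 : (b * bh B s + a * (aᵀ * bF B s))
      * (-(((bh B s)⁻¹ * (b * bh B s + a * (aᵀ * bF B s))) * (bh B s)⁻¹))
      = -(b * ((b * bh B s + a * (aᵀ * bF B s)) * (bh B s)⁻¹)
          + a * (aᵀ * ((bh B s - bw B s - 1) * (bh B s)⁻¹))) := by
    rw [Matrix.mul_neg, Matrix.add_mul]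
    congr 2
    · calc b * bh B s * (((bh B s)⁻¹ * (b * bh B s + a * (aᵀ * bF B s))) * (bh B s)⁻¹)
          = b * (bh B s * ((bh B s)⁻¹ * ((b * bh B s + a * (aᵀ * bF B s)) * (bh B s)⁻¹))) := by
            simp only [Matrix.mul_assoc]
        _ = b * ((b * bh B s + a * (aᵀ * bF B s)) * (bh B s)⁻¹) := by rw [can1 s]
    · calc a * (aᵀ * bF B s) * (((bh B s)⁻¹ * (b * bh B s + a * (aᵀ * bF B s))) * (bh B s)⁻¹)
          = a * (aᵀ * (bF B s * ((bh B s)⁻¹ * ((b * bh B s + a * (aᵀ * bF B s)) * (bh B s)⁻¹)))) := by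
            simp only [Matrix.mul_assoc]
        _ = a * (aᵀ * ((bh B s - bw B s - 1) * (bh B s)⁻¹)) := by rw [step2]
  rw [expand1]
  have expand2 : (b * (b * bh B s + a * (aᵀ * bF B s)) + a * (aᵀ * bh B s - aᵀ * bw B s))
        * (bh B s)⁻¹
      = b * ((b * bh B s + a * (aᵀ * bF B s)) * (bh B s)⁻¹)
        + a * (aᵀ * ((bh B s - bw B s) * (bh B s)⁻¹)) := by
    simp only [Matrix.add_mul, Matrix.sub_mul, Matrix.mul_sub, Matrix.mul_assoc]
  rw [expand2]
  have cancel : ∀ X Y Z : Matrix (Fin n) (Fin n) ℝ, X + Y + -(X + Z) = Y - Z :=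
    fun X Y Z => by abel
  rw [cancel]
  have last : aᵀ * ((bh B s - bw B s) * (bh B s)⁻¹)
      - aᵀ * ((bh B s - bw B s - 1) * (bh B s)⁻¹) = aᵀ * (bh B s)⁻¹ := by
    rw [← Matrix.mul_sub, ← Matrix.sub_mul]
    have : bh B s - bw B s - (bh B s - bw B s - 1) = 1 := by abel
    rw [this, Matrix.one_mul]
  rw [← Matrix.mul_sub, last, Matrix.mul_assoc]

include hb hB in
theorem main_all (h : ℝ → Matrix (Fin n) (Fin n) ℝ)
    (hh : ∀ s, h s = (NormedSpace.exp (s • B)).toBlocks₁₁) (s : ℝ) :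
    (h s).PosDef ∧ (h s)ᵀ = h s ∧
      matDeriv (fun t => matDeriv h t * (h t)⁻¹) s = a * aᵀ * (h s)⁻¹ := by
  have hfun : h = bh B := by
    funext t
    rw [hh t]
    rfl
  subst hfun
  exact ⟨posDef_bh hb hB s, bh_symm hb hB s, main_ode hb hB s⟩

end Main

end Stmt8Aux

/-- let `B = B(b,a,0) = [[b,a,0],[aᵀ,0,-aᵀ],[0,-a,-b]]` with `b` symmetric,
`G(s) = exp(sB)`, and `h(s)` the upper-left `n×n` block of `G(s)`. Then `h(s)` is
symmetric positive definite and satisfies the matrix Bratu equation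
`(h'h⁻¹)' = (a aᵀ) h⁻¹`. -/
theorem stmt8 (n r : ℕ)
    (b : Matrix (Fin n) (Fin n) ℝ) (a : Matrix (Fin n) (Fin r) ℝ) (hb : bᵀ = b)
    (B : Matrix (Fin n ⊕ (Fin r ⊕ Fin n)) (Fin n ⊕ (Fin r ⊕ Fin n)) ℝ)
    (hB : B = Matrix.fromBlocks b (Matrix.fromCols a 0) (Matrix.fromRows aᵀ 0)
      (Matrix.fromBlocks 0 (-aᵀ) (-a) (-b)))
    (h : ℝ → Matrix (Fin n) (Fin n) ℝ)
    (hh : ∀ s, h s = (NormedSpace.exp (s • B)).toBlocks₁₁) (s : ℝ) :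
    (h s).PosDef ∧ (h s)ᵀ = h s ∧
      matDeriv (fun t => matDeriv h t * (h t)⁻¹) s = a * aᵀ * (h s)⁻¹ := by
  exact Stmt8Aux.main_all hb hB h hh s
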